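/- For a nontrivial finite cyclic group G, every maximal subgroup of G has even order if and only if 4 divides |G|. -/

import Mathlib

/-- A subgroup of prime index is a coatom. -/
lemma aux_isCoatom_of_index_prime {G : Type*} [Group G] {K : Subgroup G} {p : ℕ}
    (hp : p.Prime) (h : K.index = p) : IsCoatom K := by
  constructor
  · intro htop
    rw [htop, Subgroup.index_top] at h
    exact hp.ne_one h.symm
  · intro L hKL
    have hle : K ≤ L := hKL.le
    have hmul : K.relIndex L * L.index = p := by
      rw [Subgroup.relIndex_mul_index hle, h]
    have hdvd : L.index ∣ p := Dvd.intro_left _ hmul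
    rcases (Nat.dvd_prime hp).mp hdvd with h1 | hP
    · exact Subgroup.index_eq_one.mp h1
    · exfalso
      rw [hP] at hmul
      have : K.relIndex L = 1 :=
        Nat.eq_of_mul_eq_mul_right hp.pos (by rw [one_mul]; exact hmul)
      exact absurd (Subgroup.relIndex_eq_one.mp this) hKL.not_ge

/-- In a finite commutative-quotient setting, a coatom has prime index. -/
lemma aux_index_prime_of_isCoatom {G : Type*} [Group G] [Finite G] [IsCyclic G]
    {M : Subgroup G} (h : IsCoatom M) : M.index.Prime := by
  letI : CommGroup G := IsCyclic.commGroup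
  haveI : M.Normal := Subgroup.normal_of_comm M
  have hsurj : Function.Surjective (QuotientGroup.mk' M) := QuotientGroup.mk'_surjective M
  haveI : Nontrivial (G ⧸ M) := by
    have h1 : M.index ≠ 1 := fun he => h.1 (Subgroup.index_eq_one.mp he)
    have h0 : M.index ≠ 0 := Subgroup.index_ne_zero_of_finite
    have hlt : 1 < Nat.card (G ⧸ M) := by rw [← Subgroup.index_eq_card]; omega
    exact Finite.one_lt_card_iff_nontrivial.mp hlt
  haveI : IsSimpleGroup (G ⧸ M) := by
    constructor
    intro H _
    set K := H.comap (QuotientGroup.mk' M) with hK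
    have hMK : M ≤ K := by
      have hk := Subgroup.ker_le_comap (QuotientGroup.mk' M) H
      rwa [QuotientGroup.ker_mk'] at hk
    have hmapK : K.map (QuotientGroup.mk' M) = H :=
      Subgroup.map_comap_eq_self_of_surjective hsurj H
    rcases eq_or_lt_of_le hMK with heq | hlt
    · left
      rw [← hmapK, ← heq, Subgroup.map_eq_bot_iff, QuotientGroup.ker_mk' M]
    · right
      rw [← hmapK, h.2 K hlt]
      exact Subgroup.map_top_of_surjective _ hsurj
  rw [Subgroup.index_eq_card]
  exact IsSimpleGroup.prime_card

theorem stmt_2 {G : Type*} [Group G] [Finite G] [IsCyclic G] [Nontrivial G] :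
    (∀ M : Subgroup G, IsCoatom M → Even (Nat.card M)) ↔ 4 ∣ Nat.card G := by
  set n := Nat.card G with hn
  constructor
  · intro hall
    -- there exists a coatom
    obtain ⟨M, hM⟩ : ∃ M : Subgroup G, IsCoatom M := IsCoatomic.exists_coatom (α := Subgroup G)
    have h2 : 2 ∣ n := by
      have := hall M hM
      have hdvd : Nat.card M ∣ n := Subgroup.card_subgroup_dvd_card M
      exact dvd_trans (even_iff_two_dvd.mp this) hdvd
    -- construct a subgroup of index 2
    obtain ⟨g, hg⟩ := IsCyclic.exists_ofOrder_eq_natCard (α := G)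
    set K := Subgroup.zpowers (g ^ 2) with hKdef
    have hcardK : Nat.card K = n / 2 := by
      rw [hKdef, Nat.card_zpowers, orderOf_pow, hg, ← hn, Nat.gcd_eq_right_iff_dvd.mpr h2]
    have hindexK : K.index = 2 := by
      have hmul : Nat.card K * K.index = n := Subgroup.card_mul_index K
      rw [hcardK] at hmul
      have hpos : 0 < n := Nat.card_pos
      have h2pos : 0 < n / 2 := Nat.div_pos (Nat.le_of_dvd hpos h2) (by norm_num)
      have : n / 2 * 2 = n := Nat.div_mul_cancel h2
      exact Nat.eq_of_mul_eq_mul_left h2pos (by omega)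
    have hKcoatom : IsCoatom K := aux_isCoatom_of_index_prime Nat.prime_two hindexK
    have hKeven := hall K hKcoatom
    rw [hcardK, even_iff_two_dvd] at hKeven
    obtain ⟨k, hk⟩ := hKeven
    have : n = 4 * k := by omega
    exact ⟨k, this⟩
  · intro h4 M hM
    have hp : M.index.Prime := aux_index_prime_of_isCoatom hM
    have hmul : Nat.card M * M.index = n := Subgroup.card_mul_index M
    rw [even_iff_two_dvd]
    by_contra hodd
    -- card M odd, so gcd 4 (card M) ∈ {1}
    have h2cop : Nat.Coprime 2 (Nat.card M) :=
      (Nat.Prime.coprime_iff_not_dvd Nat.prime_two).mpr hodd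
    have hcop : Nat.Coprime 4 (Nat.card M) := by
      have := Nat.Coprime.mul h2cop h2cop
      norm_num at this
      exact this
    have hdvd4 : (4 : ℕ) ∣ M.index := Nat.Coprime.dvd_of_dvd_mul_left hcop (hmul ▸ h4)
    rcases (Nat.dvd_prime hp).mp hdvd4 with h' | h'
    · omega
    · rw [← h'] at hp
      norm_num at hp
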